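/- arXiv:1902.06476 — 3 statements merged into one kernel-verified Lean document; each statement's English description precedes it below -/
import Mathlib

section
/- Let X be a totally disconnected compact metrizable space and K a field. The map μ ↦ rk_μ, sending a Borel probability measure μ on X to the pseudo-rank function rk_μ(f) = μ({x : f(x) ≠ 0}) on C_K(X), is a bijection between the set of Borel probability measures on X and the set of pseudo-rank functions on C_K(X). Under this bijection, T-invariant measures correspond to T-invariant pseudo-rank functions, for any homeomorphism T of X. -/
open MeasureTheory

open Set
open scoped ENNReal

section Aux
variable {X : Type*} [TopologicalSpace X] {K : Type*} [Field K]

lemma lc_supp_clopen (f : LocallyConstant X K) : IsClopen {x | f x ≠ 0} := by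
  refine ⟨?_, f.isLocallyConstant {0}ᶜ⟩
  rw [← isOpen_compl_iff]
  have : {x | f x ≠ 0}ᶜ = f ⁻¹' {0} := by ext x; simp
  rw [this]; exact f.isLocallyConstant {0}

lemma charFn_of_mem {U : Set X} (hU : IsClopen U) {x : X} (h : x ∈ U) :
    LocallyConstant.charFn K hU x = 1 := by
  simp [LocallyConstant.coe_charFn, Set.indicator_of_mem h]

lemma charFn_of_not_mem {U : Set X} (hU : IsClopen U) {x : X} (h : x ∉ U) :
    LocallyConstant.charFn K hU x = 0 := by
  simp [LocallyConstant.coe_charFn, Set.indicator_of_notMem h]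

lemma charFn_supp {U : Set X} (hU : IsClopen U) :
    {x | LocallyConstant.charFn K hU x ≠ 0} = U := by
  ext x
  simp only [mem_setOf_eq]
  by_cases h : x ∈ U
  · simp [charFn_of_mem (K := K) hU h, h]
  · simp [charFn_of_not_mem (K := K) hU h, h]

lemma charFn_congr {U V : Set X} (hU : IsClopen U) (hV : IsClopen V) (h : U = V) :
    LocallyConstant.charFn K hU = LocallyConstant.charFn K hV := by subst h; rfl

lemma charFn_idem {U : Set X} (hU : IsClopen U) :
    LocallyConstant.charFn K hU * LocallyConstant.charFn K hU = LocallyConstant.charFn K hU := by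
  ext x
  simp only [LocallyConstant.coe_mul, Pi.mul_apply]
  by_cases h : x ∈ U <;> simp [charFn_of_mem (K := K) hU, charFn_of_not_mem (K := K) hU, h]

lemma charFn_mul_subset {U V : Set X} (hU : IsClopen U) (hV : IsClopen V) (h : U ⊆ V) :
    LocallyConstant.charFn K hU * LocallyConstant.charFn K hV = LocallyConstant.charFn K hU := by
  ext x
  simp only [LocallyConstant.coe_mul, Pi.mul_apply]
  by_cases hx : x ∈ U
  · simp [charFn_of_mem (K := K) hU hx, charFn_of_mem (K := K) hV (h hx)]
  · simp [charFn_of_not_mem (K := K) hU hx]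

lemma charFn_mul_disjoint {U V : Set X} (hU : IsClopen U) (hV : IsClopen V) (h : Disjoint U V) :
    LocallyConstant.charFn K hU * LocallyConstant.charFn K hV = 0 := by
  ext x
  simp only [LocallyConstant.coe_mul, Pi.mul_apply, LocallyConstant.coe_zero, Pi.zero_apply]
  by_cases hx : x ∈ U
  · have hx' : x ∉ V := fun hx' => h.ne_of_mem hx hx' rfl
    simp [charFn_of_not_mem (K := K) hV hx']
  · simp [charFn_of_not_mem (K := K) hU hx]

lemma charFn_add_disjoint {U V : Set X} (hU : IsClopen U) (hV : IsClopen V) (h : Disjoint U V) :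
    LocallyConstant.charFn K hU + LocallyConstant.charFn K hV
      = LocallyConstant.charFn K (hU.union hV) := by
  ext x
  simp only [LocallyConstant.coe_add, Pi.add_apply]
  by_cases hx : x ∈ U
  · have hx' : x ∉ V := fun hx' => h.ne_of_mem hx hx' rfl
    simp [charFn_of_mem (K := K) hU hx, charFn_of_not_mem (K := K) hV hx',
      charFn_of_mem (K := K) (hU.union hV) (Or.inl hx)]
  · by_cases hx' : x ∈ V
    · simp [charFn_of_not_mem (K := K) hU hx, charFn_of_mem (K := K) hV hx',
        charFn_of_mem (K := K) (hU.union hV) (Or.inr hx')]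
    · simp [charFn_of_not_mem (K := K) hU hx, charFn_of_not_mem (K := K) hV hx',
        charFn_of_not_mem (K := K) (hU.union hV) (x := x) (by simp [hx, hx'])]

lemma charFn_empty : LocallyConstant.charFn K (isClopen_empty (X := X)) = 0 := by
  ext x; simp [charFn_of_not_mem (K := K) isClopen_empty (notMem_empty x)]

lemma charFn_univ : LocallyConstant.charFn K (isClopen_univ (X := X)) = 1 := by
  ext x; simp [charFn_of_mem (K := K) isClopen_univ (mem_univ x)]

lemma mul_inv_eq_charFn (f : LocallyConstant X K) :
    f * f.map (·⁻¹) = LocallyConstant.charFn K (lc_supp_clopen f) := by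
  ext x
  simp only [LocallyConstant.coe_mul, Pi.mul_apply, LocallyConstant.map_apply]
  by_cases h : f x = 0
  · simp [h, charFn_of_not_mem (K := K) (lc_supp_clopen f) (x := x) (by simp [h])]
  · simp [mul_inv_cancel₀ h, charFn_of_mem (K := K) (lc_supp_clopen f) (x := x) (by simp [h])]

lemma charFn_mul_self (f : LocallyConstant X K) :
    LocallyConstant.charFn K (lc_supp_clopen f) * f = f := by
  ext x
  simp only [LocallyConstant.coe_mul, Pi.mul_apply]
  by_cases h : f x = 0
  · simp [h]
  · simp [charFn_of_mem (K := K) (lc_supp_clopen f) (x := x) (by simp [h])]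

end Aux


section Aux2
variable {X : Type*} [TopologicalSpace X] {K : Type*} [Field K]

lemma charFn_P_mono (P : LocallyConstant X K → ℝ)
    (hPmul : ∀ f g, P (f * g) ≤ P f ∧ P (f * g) ≤ P g)
    {U V : Set X} (hU : IsClopen U) (hV : IsClopen V) (h : U ⊆ V) :
    P (LocallyConstant.charFn K hU) ≤ P (LocallyConstant.charFn K hV) := by
  have := (hPmul (LocallyConstant.charFn K hU) (LocallyConstant.charFn K hV)).2
  rwa [charFn_mul_subset hU hV h] at this

lemma charFn_P_add (P : LocallyConstant X K → ℝ)
    (hPadd : ∀ e f : LocallyConstant X K, e * e = e → f * f = f → e * f = 0 →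
      P (e + f) = P e + P f)
    {U V : Set X} (hU : IsClopen U) (hV : IsClopen V) (h : Disjoint U V) :
    P (LocallyConstant.charFn K (hU.union hV))
      = P (LocallyConstant.charFn K hU) + P (LocallyConstant.charFn K hV) := by
  rw [← charFn_add_disjoint hU hV h]
  exact hPadd _ _ (charFn_idem hU) (charFn_idem hV) (charFn_mul_disjoint hU hV h)

lemma charFn_P_sub2 (P : LocallyConstant X K → ℝ)
    (hPmul : ∀ f g, P (f * g) ≤ P f ∧ P (f * g) ≤ P g)
    (hPadd : ∀ e f : LocallyConstant X K, e * e = e → f * f = f → e * f = 0 →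
      P (e + f) = P e + P f)
    {U V : Set X} (hU : IsClopen U) (hV : IsClopen V) :
    P (LocallyConstant.charFn K (hU.union hV))
      ≤ P (LocallyConstant.charFn K hU) + P (LocallyConstant.charFn K hV) := by
  have he : U ∪ (V \ U) = U ∪ V := Set.union_diff_self
  calc P (LocallyConstant.charFn K (hU.union hV))
      = P (LocallyConstant.charFn K (hU.union (hV.diff hU))) := by
        rw [charFn_congr (hU.union (hV.diff hU)) (hU.union hV) he]
    _ = P (LocallyConstant.charFn K hU) + P (LocallyConstant.charFn K (hV.diff hU)) :=
        charFn_P_add P hPadd _ _ Set.disjoint_sdiff_right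
    _ ≤ P (LocallyConstant.charFn K hU) + P (LocallyConstant.charFn K hV) := by
        gcongr
        exact charFn_P_mono P hPmul _ _ Set.diff_subset

lemma charFn_P_finset (P : LocallyConstant X K → ℝ)
    (hPz : P 0 = 0)
    (hPmul : ∀ f g, P (f * g) ≤ P f ∧ P (f * g) ≤ P g)
    (hPadd : ∀ e f : LocallyConstant X K, e * e = e → f * f = f → e * f = 0 →
      P (e + f) = P e + P f)
    {ι : Type*} (s : Finset ι) (f : ι → Set X) (hf : ∀ i, IsClopen (f i))
    (h : IsClopen (⋃ i ∈ s, f i)) :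
    P (LocallyConstant.charFn K h) ≤ ∑ i ∈ s, P (LocallyConstant.charFn K (hf i)) := by
  classical
  induction s using Finset.induction_on with
  | empty =>
      have : (⋃ i ∈ (∅ : Finset ι), f i) = (∅ : Set X) := by simp
      rw [charFn_congr h isClopen_empty this, charFn_empty, hPz]
      simp
  | @insert a s ha ih =>
      have hs : IsClopen (⋃ i ∈ s, f i) := isClopen_biUnion_finset (fun i _ => hf i)
      have he : (⋃ i ∈ insert a s, f i) = f a ∪ ⋃ i ∈ s, f i := by
        simp [Set.biUnion_insert]
      calc P (LocallyConstant.charFn K h)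
          = P (LocallyConstant.charFn K ((hf a).union hs)) := by
            rw [charFn_congr h ((hf a).union hs) he]
        _ ≤ P (LocallyConstant.charFn K (hf a)) + P (LocallyConstant.charFn K hs) :=
            charFn_P_sub2 P hPmul hPadd (hf a) hs
        _ ≤ P (LocallyConstant.charFn K (hf a))
              + ∑ i ∈ s, P (LocallyConstant.charFn K (hf i)) := by gcongr; exact ih hs
        _ = ∑ i ∈ insert a s, P (LocallyConstant.charFn K (hf i)) := by
            rw [Finset.sum_insert ha]

end Aux2

/-- for a totally disconnected compact metrizable space `X` and a field `K`,
the map `μ ↦ rk_μ`, `rk_μ f = μ {x | f x ≠ 0}`, is a bijection between Borel probability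
measures on `X` and pseudo-rank functions on `C_K(X)`; moreover, under this correspondence,
`T`-invariant measures correspond exactly to `T`-invariant pseudo-rank functions, for any
homeomorphism `T` of `X`. -/
theorem stmt9 {X : Type*} [TopologicalSpace X] [CompactSpace X]
    [TopologicalSpace.MetrizableSpace X] [TotallyDisconnectedSpace X]
    [MeasurableSpace X] [BorelSpace X]
    {K : Type*} [Field K] (T : X ≃ₜ X) :
    -- injectivity of μ ↦ rk_μ
    (∀ μ ν : Measure X, IsProbabilityMeasure μ → IsProbabilityMeasure ν →
      (∀ f : LocallyConstant X K, (μ {x | f x ≠ 0}).toReal = (ν {x | f x ≠ 0}).toReal) →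
      μ = ν) ∧
    -- surjectivity: every pseudo-rank function on C_K(X) is of the form rk_μ
    (∀ P : LocallyConstant X K → ℝ,
      (∀ f, 0 ≤ P f) → P 0 = 0 → P 1 = 1 →
      (∀ f g, P (f * g) ≤ P f ∧ P (f * g) ≤ P g) →
      (∀ e f, e * e = e → f * f = f → e * f = 0 → P (e + f) = P e + P f) →
      ∃ μ : Measure X, IsProbabilityMeasure μ ∧
        ∀ f : LocallyConstant X K, P f = (μ {x | f x ≠ 0}).toReal) ∧
    -- T-invariant measures correspond to T-invariant pseudo-rank functions
    (∀ μ : Measure X, IsProbabilityMeasure μ →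
      ((∀ A : Set X, MeasurableSet A → μ (⇑T '' A) = μ A) ↔
        (∀ f : LocallyConstant X K,
          (μ {x | (f.comap (T.symm : C(X, X))) x ≠ 0}).toReal
            = (μ {x | f x ≠ 0}).toReal))) := by
    classical
  have hgen : (inferInstance : MeasurableSpace X)
      = MeasurableSpace.generateFrom {s : Set X | IsClopen s} := by
    rw [BorelSpace.measurable_eq (α := X),
      TopologicalSpace.IsTopologicalBasis.borel_eq_generateFrom isTopologicalBasis_isClopen]
  -- Part 1: injectivity
  have inj : ∀ μ ν : Measure X, IsProbabilityMeasure μ → IsProbabilityMeasure ν →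
      (∀ f : LocallyConstant X K, (μ {x | f x ≠ 0}).toReal = (ν {x | f x ≠ 0}).toReal) →
      μ = ν := by
    intro μ ν hμ hν hagree
    haveI := hμ; haveI := hν
    refine ext_of_generate_finite _ hgen (fun s hs t ht _ => hs.inter ht) ?_
      (by rw [hμ.measure_univ, hν.measure_univ])
    intro U hU
    have h := hagree (LocallyConstant.charFn K hU)
    rw [charFn_supp] at h
    exact (ENNReal.toReal_eq_toReal_iff' (measure_ne_top μ U) (measure_ne_top ν U)).1 h
  refine ⟨inj, ?_, ?_⟩
  -- Part 2: surjectivity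
  · intro P hP0 hPz hPo hPmul hPadd
    let m : Set X → ℝ≥0∞ := fun S =>
      if h : IsClopen S then ENNReal.ofReal (P (LocallyConstant.charFn K h)) else ⊤
    have hm_clopen : ∀ {U : Set X} (hU : IsClopen U),
        m U = ENNReal.ofReal (P (LocallyConstant.charFn K hU)) := fun hU => dif_pos hU
    have hm_empty : m ∅ = 0 := by
      rw [hm_clopen isClopen_empty, charFn_empty, hPz, ENNReal.ofReal_zero]
    set mo := OuterMeasure.ofFunction m hm_empty with hmo
    have hmo_clopen : ∀ {U : Set X} (hU : IsClopen U), mo U = m U := by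
      intro U hU
      refine le_antisymm (OuterMeasure.ofFunction_le U) ?_
      rw [OuterMeasure.ofFunction_apply]
      refine le_iInf fun s' => le_iInf fun hcov => ?_
      · 
        by_cases hall : ∀ i, IsClopen (s' i)
        · have hUc : IsCompact U := hU.1.isCompact
          obtain ⟨t, ht⟩ := hUc.elim_finite_subcover s' (fun i => (hall i).2) hcov
          have hbU : IsClopen (⋃ i ∈ t, s' i) := isClopen_biUnion_finset (fun i _ => hall i)
          have h1 : P (LocallyConstant.charFn K hU)
              ≤ ∑ i ∈ t, P (LocallyConstant.charFn K (hall i)) :=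
            le_trans (charFn_P_mono P hPmul hU hbU ht)
              (charFn_P_finset P hPz hPmul hPadd t s' hall hbU)
          calc m U = ENNReal.ofReal (P (LocallyConstant.charFn K hU)) := hm_clopen hU
            _ ≤ ENNReal.ofReal (∑ i ∈ t, P (LocallyConstant.charFn K (hall i))) :=
                ENNReal.ofReal_le_ofReal h1
            _ = ∑ i ∈ t, ENNReal.ofReal (P (LocallyConstant.charFn K (hall i))) :=
                ENNReal.ofReal_sum_of_nonneg (fun i _ => hP0 _)
            _ = ∑ i ∈ t, m (s' i) := by
                refine Finset.sum_congr rfl (fun i _ => ?_)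
                rw [hm_clopen (hall i)]
            _ ≤ ∑' i, m (s' i) := ENNReal.sum_le_tsum t
        · push_neg at hall
          obtain ⟨i, hi⟩ := hall
          have htop : m (s' i) = ⊤ := dif_neg hi
          exact le_trans le_top (htop ▸ ENNReal.le_tsum i)
    have hcar : ∀ {U : Set X}, IsClopen U → MeasurableSet[mo.caratheodory] U := by
      intro U hU
      refine OuterMeasure.ofFunction_caratheodory fun t => ?_
      by_cases ht : IsClopen t
      · have h1 : IsClopen (t ∩ U) := ht.inter hU
        have h2 : IsClopen (t \ U) := ht.diff hU
        rw [hm_clopen h1, hm_clopen h2, hm_clopen ht, ← ENNReal.ofReal_add (hP0 _) (hP0 _)]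
        apply ENNReal.ofReal_le_ofReal
        have hd : Disjoint (t ∩ U) (t \ U) :=
          Set.disjoint_sdiff_right.mono_left Set.inter_subset_right
        have := charFn_P_add P hPadd h1 h2 hd
        rw [charFn_congr (h1.union h2) ht (Set.inter_union_diff t U)] at this
        exact le_of_eq this.symm
      · simp [m, ht]
    have hle : (inferInstance : MeasurableSpace X) ≤ mo.caratheodory := by
      rw [hgen]
      exact MeasurableSpace.generateFrom_le fun s hs => hcar hs
    set μ := mo.toMeasure hle with hμdef
    have hμap : ∀ {U : Set X} (hU : IsClopen U),
        μ U = ENNReal.ofReal (P (LocallyConstant.charFn K hU)) := by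
      intro U hU
      rw [hμdef, toMeasure_apply _ _ hU.2.measurableSet, hmo_clopen hU,
        hm_clopen hU]
    have hprob : IsProbabilityMeasure μ := by
      constructor
      rw [hμap isClopen_univ, charFn_univ, hPo, ENNReal.ofReal_one]
    refine ⟨μ, hprob, fun f => ?_⟩
    have hUf := lc_supp_clopen f
    rw [hμap hUf, ENNReal.toReal_ofReal (hP0 _)]
    apply le_antisymm
    · calc P f = P (LocallyConstant.charFn K hUf * f) := by rw [charFn_mul_self]
        _ ≤ P (LocallyConstant.charFn K hUf) := (hPmul _ _).1
    · have h1 : P (LocallyConstant.charFn K hUf) = P (f * f.map (·⁻¹)) :=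
        congrArg P (mul_inv_eq_charFn f).symm
      exact le_trans (le_of_eq h1) (hPmul _ _).1
  -- Part 3: invariance
  · intro μ hμ
    haveI := hμ
    constructor
    · intro hinv f
      have hset : {x | (f.comap (T.symm : C(X, X))) x ≠ 0} = ⇑T '' {x | f x ≠ 0} := by
        ext x
        simp only [mem_setOf_eq, LocallyConstant.coe_comap_apply]
        constructor
        · intro h; exact ⟨T.symm x, h, by simp⟩
        · rintro ⟨y, hy, rfl⟩; simpa using hy
      rw [hset, hinv _ ((lc_supp_clopen f).2.measurableSet)]
    · intro hf A hA
      set ν := μ.map ⇑T.symm with hν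
      haveI hνp : IsProbabilityMeasure ν :=
        Measure.isProbabilityMeasure_map T.symm.measurable.aemeasurable
      have hνμ : ν = μ := by
        apply inj ν μ hνp hμ
        intro f
        rw [hν, Measure.map_apply T.symm.measurable ((lc_supp_clopen f).2.measurableSet)]
        have hpre : ⇑T.symm ⁻¹' {x | f x ≠ 0}
            = {x | (f.comap (T.symm : C(X, X))) x ≠ 0} := by
          ext x; simp [LocallyConstant.coe_comap_apply]
        rw [hpre]
        exact hf f
      have himg : ⇑T '' A = ⇑T.symm ⁻¹' A := by
        ext x
        constructor
        · rintro ⟨y, hy, rfl⟩; simpa using hy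
        · intro h; exact ⟨T.symm x, h, by simp⟩
      rw [himg, ← Measure.map_apply T.symm.measurable hA, ← hν, hνμ]
end

section
/- Let T be a homeomorphism of a totally disconnected compact metrizable space X, K a field, and rk a Sylvester matrix rank function on the algebraic crossed product A = C_K(X) ⋊_T ℤ. Then the assignment U ↦ rk(χ_U) on clopen subsets U of X extends uniquely to a T-invariant Borel probability measure on X. -/
/-- A Sylvester matrix rank function on a unital ring `R`: a nonnegative real-valued
function on all (rectangular) matrices over `R` satisfying `rk 0 = 0`, `rk 1 = 1`,
`rk (AB) ≤ min (rk A) (rk B)`, additivity on block-diagonal matrices, and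
superadditivity on block upper-triangular matrices. -/
structure SylvesterRank (R : Type*) [Ring R] where
  rk : ∀ {n m : ℕ}, Matrix (Fin n) (Fin m) R → ℝ
  rk_nonneg : ∀ {n m : ℕ} (M : Matrix (Fin n) (Fin m) R), 0 ≤ rk M
  rk_zero : ∀ {n m : ℕ}, rk (0 : Matrix (Fin n) (Fin m) R) = 0
  rk_one : rk (1 : Matrix (Fin 1) (Fin 1) R) = 1
  rk_mul_le_left : ∀ {n m k : ℕ} (A : Matrix (Fin n) (Fin m) R) (B : Matrix (Fin m) (Fin k) R),
    rk (A * B) ≤ rk A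
  rk_mul_le_right : ∀ {n m k : ℕ} (A : Matrix (Fin n) (Fin m) R) (B : Matrix (Fin m) (Fin k) R),
    rk (A * B) ≤ rk B
  rk_diag : ∀ {n m p q : ℕ} (A : Matrix (Fin n) (Fin m) R) (B : Matrix (Fin p) (Fin q) R),
    rk ((Matrix.fromBlocks A 0 0 B).submatrix finSumFinEquiv.symm finSumFinEquiv.symm)
      = rk A + rk B
  rk_triangular : ∀ {n m p q : ℕ} (A : Matrix (Fin n) (Fin m) R) (C : Matrix (Fin n) (Fin q) R)
    (B : Matrix (Fin p) (Fin q) R),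
    rk A + rk B ≤ rk ((Matrix.fromBlocks A C 0 B).submatrix finSumFinEquiv.symm finSumFinEquiv.symm)

/-- The rank of a ring element, viewed as a `1 × 1` matrix. -/
def SylvesterRank.rk1 {R : Type*} [Ring R] (P : SylvesterRank R) (a : R) : ℝ :=
  P.rk (Matrix.of fun (_ _ : Fin 1) => a)


open MeasureTheory


open TopologicalSpace
open scoped ENNReal

namespace SylvesterRank
variable {R : Type*} [Ring R] (P : SylvesterRank R)

lemma m1_mul (a b : R) : (Matrix.of fun (_ _ : Fin 1) => a * b)
    = (Matrix.of fun (_ _ : Fin 1) => a) * (Matrix.of fun (_ _ : Fin 1) => b) := by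
  ext i j; simp [Matrix.mul_apply]

lemma rk1_nonneg (a : R) : 0 ≤ P.rk1 a := P.rk_nonneg _

lemma rk1_mul_le_left (a b : R) : P.rk1 (a * b) ≤ P.rk1 a := by
  rw [rk1, m1_mul]; exact P.rk_mul_le_left _ _

lemma rk1_mul_le_right (a b : R) : P.rk1 (a * b) ≤ P.rk1 b := by
  rw [rk1, m1_mul]; exact P.rk_mul_le_right _ _

lemma rk1_one : P.rk1 (1 : R) = 1 := by
  have : (Matrix.of fun (_ _ : Fin 1) => (1 : R)) = (1 : Matrix (Fin 1) (Fin 1) R) := by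
    ext i j
    have : i = j := Subsingleton.elim i j
    simp [this, Matrix.one_apply]
  rw [rk1, this, P.rk_one]

lemma rk1_zero : P.rk1 (0 : R) = 0 := by
  have : (Matrix.of fun (_ _ : Fin 1) => (0 : R)) = (0 : Matrix (Fin 1) (Fin 1) R) := by
    ext i j; simp
  rw [rk1, this, P.rk_zero]

lemma rk1_le_one (a : R) : P.rk1 a ≤ 1 := by
  have := P.rk1_mul_le_right a 1
  rwa [mul_one, rk1_one] at this

lemma rk1_conj (u : Rˣ) (a : R) : P.rk1 ((u : R) * a * ((u⁻¹ : Rˣ) : R)) = P.rk1 a := by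
  apply le_antisymm
  · calc P.rk1 ((u : R) * a * ((u⁻¹ : Rˣ) : R)) ≤ P.rk1 ((u : R) * a) := P.rk1_mul_le_left _ _
    _ ≤ P.rk1 a := P.rk1_mul_le_right _ _
  · have key : a = ((u⁻¹ : Rˣ) : R) * ((u : R) * a * ((u⁻¹ : Rˣ) : R)) * (u : R) := by
      simp [mul_assoc]
    calc P.rk1 a = P.rk1 (((u⁻¹ : Rˣ) : R) * ((u : R) * a * ((u⁻¹ : Rˣ) : R)) * (u : R)) := by
          rw [← key]
      _ ≤ P.rk1 (((u⁻¹ : Rˣ) : R) * ((u : R) * a * ((u⁻¹ : Rˣ) : R))) := P.rk1_mul_le_left _ _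
      _ ≤ P.rk1 ((u : R) * a * ((u⁻¹ : Rˣ) : R)) := P.rk1_mul_le_right _ _

lemma rk1_add_orthogonal (e f : R) (he : e * e = e) (hf : f * f = f)
    (hef : e * f = 0) (hfe : f * e = 0) : P.rk1 (e + f) = P.rk1 e + P.rk1 f := by
  classical
  set A : Matrix (Fin 1) (Fin 1) R := Matrix.of fun _ _ => e with hA
  set B : Matrix (Fin 1) (Fin 1) R := Matrix.of fun _ _ => f with hB
  set D : Matrix (Fin (1+1)) (Fin (1+1)) R :=
    (Matrix.fromBlocks A 0 0 B).submatrix finSumFinEquiv.symm finSumFinEquiv.symm with hD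
  have hDentries : ∀ i j, D i j = if i = 0 ∧ j = 0 then e else if i = 1 ∧ j = 1 then f else 0 := by
    intro i j
    have e0 : finSumFinEquiv.symm (0 : Fin (1+1)) = Sum.inl 0 := rfl
    have e1 : finSumFinEquiv.symm (1 : Fin (1+1)) = Sum.inr 0 := rfl
    fin_cases i <;> fin_cases j <;>
      simp [hD, hA, hB, Matrix.fromBlocks, Matrix.submatrix_apply, e0, e1]
  have hdiag : P.rk D = P.rk1 e + P.rk1 f := P.rk_diag A B
  set E : Matrix (Fin 1) (Fin 1) R := Matrix.of fun _ _ => (e + f) with hE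
  set Col : Matrix (Fin (1+1)) (Fin 1) R := Matrix.of fun i _ => if i = 0 then e else f with hCol
  set Row : Matrix (Fin 1) (Fin (1+1)) R := Matrix.of fun _ j => if j = 0 then e else f with hRow
  have h1 : Col * E * Row = D := by
    ext i j
    fin_cases i <;> fin_cases j <;>
      simp [hCol, hE, hRow, hDentries, Matrix.mul_apply, mul_add, add_mul, he, hf, hef, hfe]
  set R2 : Matrix (Fin 1) (Fin (1+1)) R := Matrix.of fun _ _ => (1 : R) with hR2
  set C2 : Matrix (Fin (1+1)) (Fin 1) R := Matrix.of fun _ _ => (1 : R) with hC2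
  have h2 : R2 * D * C2 = E := by
    ext i j
    fin_cases i <;> fin_cases j <;>
      simp [hR2, hC2, hE, hDentries, Matrix.mul_apply, Fin.sum_univ_succ]
  have le1 : P.rk D ≤ P.rk1 (e + f) := by
    calc P.rk D = P.rk (Col * E * Row) := by rw [h1]
    _ ≤ P.rk (Col * E) := P.rk_mul_le_left _ _
    _ ≤ P.rk E := P.rk_mul_le_right _ _
  have le2 : P.rk1 (e + f) ≤ P.rk D := by
    calc P.rk E = P.rk (R2 * D * C2) := by rw [h2]
    _ ≤ P.rk (R2 * D) := P.rk_mul_le_left _ _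
    _ ≤ P.rk D := P.rk_mul_le_right _ _
  have : P.rk1 (e + f) = P.rk D := le_antisymm le2 le1
  rw [this, hdiag]

end SylvesterRank

section Helpers

open MeasureTheory Set TopologicalSpace
open scoped ENNReal

namespace Stmt10Aux

variable {X : Type*} [TopologicalSpace X] [CompactSpace X] [T2Space X]
  [SecondCountableTopology X] [TotallyDisconnectedSpace X]
  [MeasurableSpace X] [BorelSpace X]

lemma clopen_generates :
    (‹_› : MeasurableSpace X) = MeasurableSpace.generateFrom {s : Set X | IsClopen s} := by
  rw [BorelSpace.measurable_eq (α := X)]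
  exact isTopologicalBasis_isClopen.borel_eq_generateFrom

lemma measure_ext_clopen (μ ν : Measure X) [IsProbabilityMeasure μ] [IsProbabilityMeasure ν]
    (h : ∀ U : Set X, IsClopen U → μ U = ν U) : μ = ν := by
  refine ext_of_generate_finite _ clopen_generates ?_ (fun s hs => h s hs) ?_
  · intro s hs t ht _
    exact hs.inter ht
  · rw [measure_univ, measure_univ]

lemma exists_measure_of_clopen_content (m : Set X → ℝ≥0∞)
    (h_empty : m ∅ = 0)
    (h_add : ∀ U V : Set X, IsClopen U → IsClopen V → Disjoint U V → m (U ∪ V) = m U + m V)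
    (h_mono : ∀ U V : Set X, IsClopen U → IsClopen V → U ⊆ V → m U ≤ m V) :
    ∃ μ : Measure X, ∀ U : Set X, IsClopen U → μ U = m U := by
  classical
  set m' : ∀ s : Set X, IsClopen s → ℝ≥0∞ := fun s _ => m s with hm'
  have h_empty' : m' ∅ isClopen_empty = 0 := h_empty
  set μ0 : OuterMeasure X := inducedOuterMeasure m' isClopen_empty h_empty' with hμ0def
  have hof : μ0 = OuterMeasure.ofFunction (extend m') (extend_empty isClopen_empty h_empty') := rfl
  -- two-set subadditivity
  have h_subadd2 : ∀ U V : Set X, IsClopen U → IsClopen V → m (U ∪ V) ≤ m U + m V := by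
    intro U V hU hV
    calc m (U ∪ V) = m (U ∪ (V \ U)) := by rw [union_diff_self]
      _ = m U + m (V \ U) :=
        h_add _ _ hU (hV.diff hU) (Set.disjoint_left.mpr fun x hxU hxVU => hxVU.2 hxU)
      _ ≤ m U + m V := add_le_add le_rfl (h_mono _ _ (hV.diff hU) hV diff_subset)
  -- finite subadditivity
  have hsub : ∀ (t : Finset ℕ) (f : ℕ → Set X), (∀ i, IsClopen (f i)) →
      m (⋃ i ∈ t, f i) ≤ ∑ i ∈ t, m (f i) := by
    intro t f hf
    induction t using Finset.induction_on with
    | empty => simp [h_empty]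
    | @insert a t' ha ih =>
      rw [Finset.set_biUnion_insert, Finset.sum_insert ha]
      calc m (f a ∪ ⋃ i ∈ t', f i) ≤ m (f a) + m (⋃ i ∈ t', f i) :=
            h_subadd2 _ _ (hf a) (isClopen_biUnion_finset fun i _ => hf i)
        _ ≤ m (f a) + ∑ i ∈ t', m (f i) := add_le_add le_rfl ih
  -- μ0 is bounded by sums over countable covers
  have hle : ∀ (s : Set X) (f : ℕ → Set X), s ⊆ (⋃ i, f i) →
      μ0 s ≤ ∑' i, extend m' (f i) := by
    intro s f hsf
    rw [hof, OuterMeasure.ofFunction_apply]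
    exact iInf_le_of_le f (iInf_le _ hsf)
  -- μ0 extends m on clopens
  have hμ0 : ∀ U : Set X, IsClopen U → μ0 U = m U := by
    intro U hU
    refine le_antisymm ?_ ?_
    · calc μ0 U ≤ extend m' U := OuterMeasure.ofFunction_le U
        _ = m U := extend_eq m' hU
    · rw [hof, OuterMeasure.ofFunction_apply]
      refine le_iInf fun f => le_iInf fun hf => ?_
      by_cases hcl : ∀ i, IsClopen (f i)
      · obtain ⟨t, ht⟩ :=
          hU.isClosed.isCompact.elim_finite_subcover f (fun i => (hcl i).isOpen) hf
        calc m U ≤ m (⋃ i ∈ t, f i) :=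
              h_mono _ _ hU (isClopen_biUnion_finset fun i _ => hcl i) ht
          _ ≤ ∑ i ∈ t, m (f i) := hsub t f hcl
          _ ≤ ∑' i, m (f i) := ENNReal.sum_le_tsum t
          _ = ∑' i, extend m' (f i) := tsum_congr fun i => (extend_eq m' (hcl i)).symm
      · push_neg at hcl
        obtain ⟨i, hi⟩ := hcl
        calc m U ≤ ⊤ := le_top
          _ = extend m' (f i) := (extend_eq_top m' hi).symm
          _ ≤ ∑' i, extend m' (f i) := ENNReal.le_tsum i
  -- clopens are Caratheodory measurable
  have hcar : ∀ U : Set X, IsClopen U → MeasurableSet[μ0.caratheodory] U := by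
    intro U hU
    rw [OuterMeasure.isCaratheodory_iff_le]
    intro s
    conv_rhs => rw [hof, OuterMeasure.ofFunction_apply]
    refine le_iInf fun f => le_iInf fun hf => ?_
    by_cases hcl : ∀ i, IsClopen (f i)
    · have h1 : μ0 (s ∩ U) ≤ ∑' i, m (f i ∩ U) := by
        refine le_trans (hle _ (fun i => f i ∩ U) ?_) ?_
        · rw [← Set.iUnion_inter]
          exact Set.inter_subset_inter_left U hf
        · exact le_of_eq (tsum_congr fun i => extend_eq m' ((hcl i).inter hU))
      have h2 : μ0 (s \ U) ≤ ∑' i, m (f i \ U) := by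
        refine le_trans (hle _ (fun i => f i \ U) ?_) ?_
        · intro x hx
          obtain ⟨j, hj⟩ := Set.mem_iUnion.mp (hf hx.1)
          exact Set.mem_iUnion.mpr ⟨j, hj, hx.2⟩
        · exact le_of_eq (tsum_congr fun i => extend_eq m' ((hcl i).diff hU))
      calc μ0 (s ∩ U) + μ0 (s \ U) ≤ (∑' i, m (f i ∩ U)) + ∑' i, m (f i \ U) :=
            add_le_add h1 h2
        _ = ∑' i, (m (f i ∩ U) + m (f i \ U)) := (ENNReal.tsum_add).symm
        _ = ∑' i, m (f i) := by
            refine tsum_congr fun i => ?_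
            rw [← h_add _ _ ((hcl i).inter hU) ((hcl i).diff hU)
              (Set.disjoint_left.mpr fun x hx hx' => hx'.2 hx.2), Set.inter_union_diff]
        _ = ∑' i, extend m' (f i) := tsum_congr fun i => (extend_eq m' (hcl i)).symm
    · push_neg at hcl
      obtain ⟨i, hi⟩ := hcl
      calc μ0 (s ∩ U) + μ0 (s \ U) ≤ ⊤ := le_top
        _ = extend m' (f i) := (extend_eq_top m' hi).symm
        _ ≤ ∑' i, extend m' (f i) := ENNReal.le_tsum i
  have hms : (‹_› : MeasurableSpace X) ≤ μ0.caratheodory :=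
    (clopen_generates (X := X)).trans_le
      (MeasurableSpace.generateFrom_le fun U hU => hcar U hU)
  refine ⟨μ0.toMeasure hms, fun U hU => ?_⟩
  rw [toMeasure_apply μ0 hms hU.isOpen.measurableSet]
  exact hμ0 U hU

end Stmt10Aux

end Helpers


/-- let `T` be a homeomorphism of a totally disconnected compact metrizable
space `X`, `K` a field, and `rk` a Sylvester matrix rank function on the algebraic crossed
product `A = C_K(X) ⋊_T ℤ` (presented by a ring homomorphism `ι : C_K(X) → A` and a unit
`t` with `t ι(f) t⁻¹ = ι(f ∘ T⁻¹)`).  Then `U ↦ rk (χ_U)` on clopen subsets extends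
uniquely to a `T`-invariant Borel probability measure on `X`. -/
theorem stmt10 {X : Type*} [TopologicalSpace X] [CompactSpace X]
    [TopologicalSpace.MetrizableSpace X] [TotallyDisconnectedSpace X]
    [MeasurableSpace X] [BorelSpace X]
    {K : Type*} [Field K] (T : X ≃ₜ X)
    {A : Type*} [Ring A] (ι : LocallyConstant X K →+* A) (t : Aˣ)
    (hrel : ∀ f : LocallyConstant X K,
      (t : A) * ι f * ((t⁻¹ : Aˣ) : A) = ι (f.comap (T.symm : C(X, X))))
    (P : SylvesterRank A) :
    ∃! μ : Measure X, IsProbabilityMeasure μ ∧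
      (∀ B : Set X, MeasurableSet B → μ (⇑T '' B) = μ B) ∧
      (∀ (U : Set X) (hU : IsClopen U),
        μ U = ENNReal.ofReal (P.rk1 (ι (LocallyConstant.charFn K hU)))) := by
  classical
  haveI : T2Space X := inferInstance
  haveI : SecondCountableTopology X := by
    let _ := metrizableSpaceMetric X
    infer_instance
  -- the content on clopen sets
  set mfun : Set X → ℝ≥0∞ := fun U =>
    if h : IsClopen U then ENNReal.ofReal (P.rk1 (ι (LocallyConstant.charFn K h))) else 0
    with hmfun
  have hmval : ∀ (U : Set X) (hU : IsClopen U),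
      mfun U = ENNReal.ofReal (P.rk1 (ι (LocallyConstant.charFn K hU))) := fun U hU => dif_pos hU
  -- pointwise facts about characteristic functions
  have hchar_mul : ∀ (U V : Set X) (hU : IsClopen U) (hV : IsClopen V),
      LocallyConstant.charFn K hU * LocallyConstant.charFn K hV
        = LocallyConstant.charFn K (hU.inter hV) := by
    intro U V hU hV
    ext x
    by_cases h1 : x ∈ U <;> by_cases h2 : x ∈ V <;>
      simp [LocallyConstant.coe_charFn, Set.indicator_apply, h1, h2]
  have hchar_add : ∀ (U V : Set X) (hU : IsClopen U) (hV : IsClopen V), Disjoint U V →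
      LocallyConstant.charFn K (hU.union hV)
        = LocallyConstant.charFn K hU + LocallyConstant.charFn K hV := by
    intro U V hU hV hd
    ext x
    by_cases h1 : x ∈ U <;> by_cases h2 : x ∈ V
    · exact absurd h2 (Set.disjoint_left.mp hd h1)
    all_goals simp [LocallyConstant.coe_charFn, Set.indicator_apply, h1, h2]
  have hidem : ∀ (U : Set X) (hU : IsClopen U),
      ι (LocallyConstant.charFn K hU) * ι (LocallyConstant.charFn K hU)
        = ι (LocallyConstant.charFn K hU) := by
    intro U hU
    rw [← map_mul, hchar_mul U U hU hU]
    congr 1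
    ext x
    by_cases h1 : x ∈ U <;> simp [LocallyConstant.coe_charFn, Set.indicator_apply, h1]
  have horth : ∀ (U V : Set X) (hU : IsClopen U) (hV : IsClopen V), Disjoint U V →
      ι (LocallyConstant.charFn K hU) * ι (LocallyConstant.charFn K hV) = 0 := by
    intro U V hU hV hd
    rw [← map_mul, hchar_mul U V hU hV]
    have : LocallyConstant.charFn K (hU.inter hV) = 0 := by
      ext x
      by_cases h1 : x ∈ U <;> by_cases h2 : x ∈ V
      · exact absurd h2 (Set.disjoint_left.mp hd h1)
      all_goals simp [LocallyConstant.coe_charFn, Set.indicator_apply, h1, h2]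
    rw [this, map_zero]
  -- content properties
  have h_empty : mfun ∅ = 0 := by
    rw [hmval ∅ isClopen_empty]
    have : LocallyConstant.charFn K (isClopen_empty : IsClopen (∅ : Set X)) = 0 := by
      ext x; simp [LocallyConstant.coe_charFn]
    rw [this, map_zero, P.rk1_zero, ENNReal.ofReal_zero]
  have h_univ : mfun Set.univ = 1 := by
    rw [hmval _ isClopen_univ]
    have : LocallyConstant.charFn K (isClopen_univ : IsClopen (Set.univ : Set X)) = 1 := by
      ext x; simp [LocallyConstant.coe_charFn]
    rw [this, map_one, P.rk1_one, ENNReal.ofReal_one]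
  have h_add : ∀ U V : Set X, IsClopen U → IsClopen V → Disjoint U V →
      mfun (U ∪ V) = mfun U + mfun V := by
    intro U V hU hV hd
    rw [hmval _ (hU.union hV), hmval _ hU, hmval _ hV, hchar_add U V hU hV hd, map_add,
      P.rk1_add_orthogonal _ _ (hidem U hU) (hidem V hV) (horth U V hU hV hd)
        (horth V U hV hU hd.symm),
      ENNReal.ofReal_add (P.rk1_nonneg _) (P.rk1_nonneg _)]
  have h_mono : ∀ U V : Set X, IsClopen U → IsClopen V → U ⊆ V → mfun U ≤ mfun V := by
    intro U V hU hV hUV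
    rw [hmval _ hU, hmval _ hV]
    refine ENNReal.ofReal_le_ofReal ?_
    have : LocallyConstant.charFn K hU * LocallyConstant.charFn K hV
        = LocallyConstant.charFn K hU := by
      rw [hchar_mul U V hU hV]
      congr 1
      ext x
      by_cases h1 : x ∈ U
      · have h2 : x ∈ V := hUV h1
        simp [LocallyConstant.coe_charFn, Set.indicator_apply, h1, h2]
      · simp [LocallyConstant.coe_charFn, Set.indicator_apply, h1]
    calc P.rk1 (ι (LocallyConstant.charFn K hU))
        = P.rk1 (ι (LocallyConstant.charFn K hU) * ι (LocallyConstant.charFn K hV)) := by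
          rw [← map_mul, this]
      _ ≤ P.rk1 (ι (LocallyConstant.charFn K hV)) := P.rk1_mul_le_right _ _
  -- the measure
  obtain ⟨μ, hμU⟩ := Stmt10Aux.exists_measure_of_clopen_content mfun h_empty h_add h_mono
  haveI hprob : IsProbabilityMeasure μ := ⟨by rw [hμU _ isClopen_univ, h_univ]⟩
  -- invariance of the content
  have himg : ∀ U : Set X, ⇑T '' U = ⇑T.symm ⁻¹' U := fun U => T.toEquiv.image_eq_preimage_symm U
  have hTclopen : ∀ U : Set X, IsClopen U → IsClopen (⇑T '' U) := by
    intro U hU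
    rw [himg]
    exact hU.preimage T.symm.continuous
  have hTcontent : ∀ (U : Set X) (hU : IsClopen U), mfun (⇑T '' U) = mfun U := by
    intro U hU
    rw [hmval _ (hTclopen U hU), hmval _ hU]
    congr 1
    have hcomap : (LocallyConstant.charFn K hU).comap (T.symm : C(X, X))
        = LocallyConstant.charFn K (hTclopen U hU) := by
      ext x
      rw [LocallyConstant.coe_comap_apply]
      have hx : x ∈ ⇑T '' U ↔ T.symm x ∈ U := by rw [himg]; rfl
      by_cases h1 : T.symm x ∈ U
      · simp [LocallyConstant.coe_charFn, Set.indicator_apply, h1, hx.mpr h1]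
      · have h2 : x ∉ ⇑T '' U := fun h => h1 (hx.mp h)
        simp [LocallyConstant.coe_charFn, Set.indicator_apply, h1, h2]
    rw [← hcomap, ← hrel, P.rk1_conj]
  -- invariance of the measure
  have hmap : μ.map ⇑T.symm = μ := by
    haveI : IsProbabilityMeasure (μ.map ⇑T.symm) :=
      Measure.isProbabilityMeasure_map T.symm.measurable.aemeasurable
    refine Stmt10Aux.measure_ext_clopen _ _ (fun U hU => ?_)
    rw [Measure.map_apply T.symm.measurable hU.isOpen.measurableSet, ← himg,
      hμU _ (hTclopen U hU), hTcontent U hU, hμU U hU]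
  have hinv : ∀ B : Set X, MeasurableSet B → μ (⇑T '' B) = μ B := by
    intro B hB
    rw [himg, ← Measure.map_apply T.symm.measurable hB, hmap]
  refine ⟨μ, ⟨hprob, hinv, fun U hU => by rw [hμU U hU, hmval U hU]⟩, ?_⟩
  rintro ν ⟨hν1, _, hν3⟩
  haveI := hν1
  refine Stmt10Aux.measure_ext_clopen ν μ (fun U hU => ?_)
  rw [hν3 U hU, hμU U hU, hmval U hU]
end

section
/- Let T be a homeomorphism of a totally disconnected compact metrizable space X, K a field, A = C_K(X) ⋊_T ℤ, and let y ∈ X be a periodic point of T of period l. Then there is a unique K-algebra homomorphism Ψ : A → M_l(K[t, t^{-1}]) sending f ∈ C_K(X) to diag(f(y), f(T(y)), …, f(T^{l−1}(y))) and sending t to the matrix u = t·(∑_{i=0}^{l−2} e_{i+1,i} + e_{0,l−1}), and the kernel of Ψ is the ideal of A generated by the functions in C_K(X) vanishing on the orbit {y, T(y), …, T^{l−1}(y)} together with a neighborhood condition (i.e., generated by C_{c,K}(X \ {y, T(y), …, T^{l−1}(y)})). -/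
open LaurentPolynomial

namespace Stmt16Aux

open Fin.CommRing

variable {K : Type*} [Field K] {l : ℕ} [NeZero l]

noncomputable def uM (K : Type*) [Field K] (l : ℕ) [NeZero l] :
    Matrix (Fin l) (Fin l) (LaurentPolynomial K) :=
  Matrix.of fun i j => if i = j + 1 then T 1 else 0

noncomputable def vM (K : Type*) [Field K] (l : ℕ) [NeZero l] :
    Matrix (Fin l) (Fin l) (LaurentPolynomial K) :=
  Matrix.of fun i j => if j = i + 1 then T (-1) else 0

lemma uM_apply (i j : Fin l) : uM K l i j = if i = j + 1 then T 1 else 0 := rfl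
lemma vM_apply (i j : Fin l) : vM K l i j = if j = i + 1 then T (-1) else 0 := rfl

lemma cond_iff (i j : Fin l) : ((i : ℕ) = ((j : ℕ) + 1) % l) ↔ i = j + 1 := by
  constructor
  · intro h; apply Fin.ext; rw [Fin.val_add, Fin.val_one', Nat.add_mod_mod]; exact h
  · intro h; rw [h, Fin.val_add, Fin.val_one', Nat.add_mod_mod]

lemma uM_mul_vM : uM K l * vM K l = 1 := by
  ext i j
  rw [Matrix.mul_apply, Finset.sum_eq_single (i - 1)]
  · rw [uM_apply, vM_apply, if_pos (by ring : i = i - 1 + 1),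
      show (i - 1 + 1 : Fin l) = i from by ring]
    rcases eq_or_ne i j with h | h
    · subst h; rw [if_pos rfl, Matrix.one_apply_eq, ← T_add]; norm_num
    · rw [if_neg (Ne.symm h), mul_zero, Matrix.one_apply_ne h]
  · intro k _ hk
    rw [uM_apply, if_neg fun h => hk (by rw [h]; ring), zero_mul]
  · intro h; exact absurd (Finset.mem_univ _) h

lemma vM_mul_uM : vM K l * uM K l = 1 := by
  ext i j
  rw [Matrix.mul_apply, Finset.sum_eq_single (i + 1)]
  · rw [uM_apply, vM_apply, if_pos rfl]
    rcases eq_or_ne i j with h | h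
    · subst h; rw [if_pos rfl, Matrix.one_apply_eq, ← T_add]; norm_num
    · rw [if_neg (fun hh => h (by exact add_right_cancel hh)), mul_zero, Matrix.one_apply_ne h]
  · intro k _ hk
    rw [vM_apply, if_neg hk, zero_mul]
  · intro h; exact absurd (Finset.mem_univ _) h

noncomputable def uU (K : Type*) [Field K] (l : ℕ) [NeZero l] :
    (Matrix (Fin l) (Fin l) (LaurentPolynomial K))ˣ :=
  ⟨uM K l, vM K l, uM_mul_vM, vM_mul_uM⟩

lemma uU_zpow_apply (n : ℤ) (i j : Fin l) :
    ((uU K l ^ n :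
        (Matrix (Fin l) (Fin l) (LaurentPolynomial K))ˣ) :
        Matrix (Fin l) (Fin l) (LaurentPolynomial K)) i j
      = if i = j + ((n : ℤ) : Fin l) then T n else 0 := by
  induction n using Int.induction_on generalizing j with
  | zero => simp [Matrix.one_apply]
  | succ n ih =>
    rw [zpow_add_one, Units.val_mul, Matrix.mul_apply, Finset.sum_eq_single (j + 1)]
    · rw [ih (j + 1),
        show (uU K l : Matrix (Fin l) (Fin l) (LaurentPolynomial K)) = uM K l from rfl,
        uM_apply, if_pos rfl,
        show ((j : Fin l) + 1 + ((n : ℤ) : Fin l)) = j + (((n : ℤ) + 1 : ℤ) : Fin l) from by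
          push_cast; ring]
      split_ifs with h
      · rw [← T_add]
      · rw [zero_mul]
    · intro k _ hk
      rw [show (uU K l : Matrix (Fin l) (Fin l) (LaurentPolynomial K)) = uM K l from rfl,
        uM_apply, if_neg hk, mul_zero]
    · intro h; exact absurd (Finset.mem_univ _) h
  | pred n ih =>
    rw [zpow_sub_one, Units.val_mul, Matrix.mul_apply, Finset.sum_eq_single (j - 1)]
    · rw [ih (j - 1),
        show (((uU K l)⁻¹ : (Matrix (Fin l) (Fin l) (LaurentPolynomial K))ˣ) :
          Matrix (Fin l) (Fin l) (LaurentPolynomial K)) = vM K l from rfl,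
        vM_apply, if_pos (by ring : j = j - 1 + 1),
        show ((j : Fin l) - 1 + ((-(n : ℤ) : ℤ) : Fin l)) = j + ((-(n : ℤ) - 1 : ℤ) : Fin l) from by
          push_cast; ring,
        show (-(n : ℤ) - 1 : ℤ) = -(n : ℤ) + -1 from by ring]
      split_ifs with h
      · rw [← T_add]
      · rw [zero_mul]
    · intro k _ hk
      rw [show (((uU K l)⁻¹ : (Matrix (Fin l) (Fin l) (LaurentPolynomial K))ˣ) :
          Matrix (Fin l) (Fin l) (LaurentPolynomial K)) = vM K l from rfl,
        vM_apply, if_neg fun h => hk (by rw [h]; ring), mul_zero]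
    · intro h; exact absurd (Finset.mem_univ _) h

lemma coeff_C_mul_T (a : K) (m n : ℤ) :
    ((Finsupp.applyAddHom n).comp (AddMonoidAlgebra.coeffAddEquiv (R := K) (M := ℤ)).toAddMonoidHom : LaurentPolynomial K →+ K) (C a * T m) = if m = n then a else 0 := by
  show ((C a * T m : LaurentPolynomial K)).coeff n = _
  rw [← single_eq_C_mul_T, AddMonoidAlgebra.coeff_single, Finsupp.single_apply]

variable {X : Type*} [TopologicalSpace X]

noncomputable def DM (T : X ≃ₜ X) (y : X) (K : Type*) [Field K] (l : ℕ) (f : LocallyConstant X K) :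
    Matrix (Fin l) (Fin l) (LaurentPolynomial K) :=
  Matrix.diagonal fun i : Fin l => C (f ((⇑T)^[(i : ℕ)] y))

lemma DM_zero (T : X ≃ₜ X) (y : X) : DM T y K l 0 = 0 := by
  unfold DM
  rw [show (fun i : Fin l => C ((0 : LocallyConstant X K) ((⇑T)^[(i : ℕ)] y)))
      = fun _ => (0 : LaurentPolynomial K) from funext fun i => by simp,
    Matrix.diagonal_zero]

lemma DM_one (T : X ≃ₜ X) (y : X) : DM T y K l 1 = 1 := by
  unfold DM
  rw [show (fun i : Fin l => C ((1 : LocallyConstant X K) ((⇑T)^[(i : ℕ)] y)))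
      = fun _ => (1 : LaurentPolynomial K) from funext fun i => by simp,
    Matrix.diagonal_one]

lemma DM_mul (T : X ≃ₜ X) (y : X) (f g : LocallyConstant X K) :
    DM T y K l (f * g) = DM T y K l f * DM T y K l g := by
  unfold DM
  rw [Matrix.diagonal_mul_diagonal]
  congr 1
  funext i
  simp

lemma DM_add (T : X ≃ₜ X) (y : X) (f g : LocallyConstant X K) :
    DM T y K l (f + g) = DM T y K l f + DM T y K l g := by
  unfold DM
  ext i j
  rcases eq_or_ne i j with h | h
  · subst h; simp
  · simp [Matrix.diagonal_apply_ne _ h]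

lemma smul_C (c a : K) : c • (C a : LaurentPolynomial K) = C (c * a) := by
  rw [Algebra.smul_def, ← C_eq_algebraMap, ← map_mul]

lemma DM_smul (T : X ≃ₜ X) (y : X) (c : K) (f : LocallyConstant X K) :
    DM T y K l (c • f) = c • DM T y K l f := by
  unfold DM
  ext i j
  rcases eq_or_ne i j with h | h
  · subst h
    simp only [Matrix.diagonal_apply_eq, Matrix.smul_apply]
    rw [show (c • f) ((⇑T)^[(i : ℕ)] y) = c * f ((⇑T)^[(i : ℕ)] y) from rfl, ← smul_C]
  · simp [Matrix.diagonal_apply_ne _ h]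

lemma comap_symm_comap (T : X ≃ₜ X) (f : LocallyConstant X K) :
    (f.comap (T : C(X, X))).comap (T.symm : C(X, X)) = f := by
  ext x
  rw [LocallyConstant.coe_comap_apply, LocallyConstant.coe_comap_apply]
  simp

lemma comap_comap_symm (T : X ≃ₜ X) (f : LocallyConstant X K) :
    (f.comap (T.symm : C(X, X))).comap (T : C(X, X)) = f := by
  ext x
  rw [LocallyConstant.coe_comap_apply, LocallyConstant.coe_comap_apply]
  simp

lemma uM_mul_DM (T : X ≃ₜ X) (y : X) (hper : (⇑T)^[l] y = y) (f : LocallyConstant X K) :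
    uM K l * DM T y K l f = DM T y K l (f.comap (T.symm : C(X, X))) * uM K l := by
  funext i j
  unfold DM
  rw [Matrix.mul_diagonal, Matrix.diagonal_mul, uM_apply]
  split_ifs with h
  · have hval : T.symm ((⇑T)^[(i : ℕ)] y) = (⇑T)^[(j : ℕ)] y := by
      have hiv : (i : ℕ) = ((j : ℕ) + 1) % l := (cond_iff i j).mpr h
      rcases Nat.lt_or_ge ((j : ℕ) + 1) l with hlt | hge
      · rw [hiv, Nat.mod_eq_of_lt hlt, Function.iterate_succ_apply']
        exact T.symm_apply_apply _
      · have hj : (j : ℕ) + 1 = l := le_antisymm (Nat.succ_le_of_lt j.isLt) hge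
        have hi0 : (i : ℕ) = 0 := by rw [hiv, hj, Nat.mod_self]
        have hy : T ((⇑T)^[(j : ℕ)] y) = y := by
          have hit := Function.iterate_succ_apply' (⇑T) (j : ℕ) y
          rw [← hit, Nat.succ_eq_add_one, hj]; exact hper
        rw [hi0]
        simp only [Function.iterate_zero, id_eq]
        conv_lhs => rw [← hy]
        rw [T.symm_apply_apply]
    rw [show (f.comap (T.symm : C(X, X))) ((⇑T)^[(i : ℕ)] y)
        = f (T.symm ((⇑T)^[(i : ℕ)] y)) from rfl, hval]
    exact T_mul 1 _
  · rw [zero_mul, mul_zero]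

lemma vM_mul_DM (T : X ≃ₜ X) (y : X) (hper : (⇑T)^[l] y = y) (f : LocallyConstant X K) :
    vM K l * DM T y K l f = DM T y K l (f.comap (T : C(X, X))) * vM K l := by
  have h : uM K l * DM T y K l (f.comap (T : C(X, X))) = DM T y K l f * uM K l := by
    have h0 := uM_mul_DM T y hper (f.comap (T : C(X, X))) (l := l)
    rwa [comap_symm_comap] at h0
  calc vM K l * DM T y K l f
      = vM K l * (DM T y K l f * uM K l * vM K l) := by
        rw [mul_assoc (DM T y K l f), uM_mul_vM, mul_one]
    _ = vM K l * (uM K l * DM T y K l (f.comap (T : C(X, X))) * vM K l) := by rw [← h]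
    _ = (vM K l * uM K l) * (DM T y K l (f.comap (T : C(X, X))) * vM K l) := by
        simp only [mul_assoc]
    _ = DM T y K l (f.comap (T : C(X, X))) * vM K l := by rw [vM_mul_uM, one_mul]

end Stmt16Aux

open Stmt16Aux

/-- let `A = C_K(X) ⋊_T ℤ` be the algebraic crossed product (presented by an
algebra map `ι : C_K(X) → A` and a unit `t` satisfying `t ι(f) t⁻¹ = ι(f ∘ T⁻¹)`, such that
`(f_n)_n ↦ ∑ ι(f_n) tⁿ` is bijective), and let `y ∈ X` be a periodic point of `T` of period
`l`.  Then there is a unique `K`-algebra homomorphism `Ψ : A → M_l(K[t,t⁻¹])` with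
`Ψ(f) = diag (f(y), …, f(T^{l-1}(y)))` and `Ψ(t) = t · (∑ e_{i+1,i} + e_{0,l-1})`, and the
kernel of `Ψ` is the two-sided ideal of `A` generated by
`C_{c,K}(X \ {y, T(y), …, T^{l-1}(y)})`, the locally constant functions vanishing on the
orbit of `y`. -/
theorem stmt16 {X : Type*} [TopologicalSpace X] [CompactSpace X]
    [TopologicalSpace.MetrizableSpace X] [TotallyDisconnectedSpace X]
    {K : Type*} [Field K] (T : X ≃ₜ X)
    {A : Type*} [Ring A] [Algebra K A] (ι : LocallyConstant X K →ₐ[K] A) (t : Aˣ)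
    (hrel : ∀ f : LocallyConstant X K,
      (t : A) * ι f * ((t⁻¹ : Aˣ) : A) = ι (f.comap (T.symm : C(X, X))))
    (hbasis : Function.Bijective fun F : ℤ →₀ LocallyConstant X K =>
      F.sum fun n f => ι f * (((t ^ n : Aˣ) : A)))
    (y : X) (l : ℕ) (hl : 0 < l) (hper : (⇑T)^[l] y = y)
    (hmin : ∀ j : ℕ, 0 < j → j < l → (⇑T)^[j] y ≠ y)
    (u : Matrix (Fin l) (Fin l) (LaurentPolynomial K))
    (hu : ∀ i j : Fin l, u i j =
      if (i : ℕ) = ((j : ℕ) + 1) % l then LaurentPolynomial.T 1 else 0) :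
    (∃! Ψ : A →ₐ[K] Matrix (Fin l) (Fin l) (LaurentPolynomial K),
      (∀ f : LocallyConstant X K,
        Ψ (ι f) = Matrix.diagonal fun i : Fin l =>
          LaurentPolynomial.C (f ((⇑T)^[(i : ℕ)] y))) ∧
      Ψ (t : A) = u) ∧
    (∀ Ψ : A →ₐ[K] Matrix (Fin l) (Fin l) (LaurentPolynomial K),
      ((∀ f : LocallyConstant X K,
        Ψ (ι f) = Matrix.diagonal fun i : Fin l =>
          LaurentPolynomial.C (f ((⇑T)^[(i : ℕ)] y))) ∧
        Ψ (t : A) = u) →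
      ∀ a : A, Ψ a = 0 ↔
        a ∈ TwoSidedIdeal.span
          {b : A | ∃ f : LocallyConstant X K,
            (∀ i : ℕ, i < l → f ((⇑T)^[i] y) = 0) ∧ b = ι f}) := by
  classical
  haveI : NeZero l := ⟨hl.ne'⟩
  -- identify `u` with the auxiliary matrix
  have hueq : u = uM K l := by
    funext i j
    rw [hu i j, uM_apply]
    exact if_congr (cond_iff i j) rfl rfl
  subst hueq
  -- basic crossed-product relations
  have hA : ∀ f : LocallyConstant X K,
      (t : A) * ι f = ι (f.comap (T.symm : C(X, X))) * t := by
    intro f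
    rw [← hrel f, Units.inv_mul_cancel_right]
  have hA' : ∀ f : LocallyConstant X K,
      ((t⁻¹ : Aˣ) : A) * ι f = ι (f.comap (T : C(X, X))) * ((t⁻¹ : Aˣ) : A) := by
    intro f
    have h := hA (f.comap (T : C(X, X)))
    rw [comap_symm_comap] at h
    calc ((t⁻¹ : Aˣ) : A) * ι f
        = ((t⁻¹ : Aˣ) : A) * ι f * t * ((t⁻¹ : Aˣ) : A) :=
          (Units.mul_inv_cancel_right _ t).symm
      _ = ((t⁻¹ : Aˣ) : A) * (ι f * t) * ((t⁻¹ : Aˣ) : A) := by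
          rw [mul_assoc ((t⁻¹ : Aˣ) : A)]
      _ = ((t⁻¹ : Aˣ) : A) * ((t : A) * ι (f.comap (T : C(X, X)))) * ((t⁻¹ : Aˣ) : A) := by
          rw [← h]
      _ = (((t⁻¹ : Aˣ) : A) * (t : A)) * ι (f.comap (T : C(X, X))) * ((t⁻¹ : Aˣ) : A) := by
          rw [← mul_assoc]
      _ = ι (f.comap (T : C(X, X))) * ((t⁻¹ : Aˣ) : A) := by
          rw [Units.inv_mul, one_mul]
  have hM := fun f : LocallyConstant X K => uM_mul_DM T y hper f (l := l)
  have hM' := fun f : LocallyConstant X K => vM_mul_DM T y hper f (l := l)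
  -- the key commutation lemma for arbitrary powers
  have hkey : ∀ m : ℤ, ∀ g : LocallyConstant X K, ∃ g' : LocallyConstant X K,
      ((t ^ m : Aˣ) : A) * ι g = ι g' * ((t ^ m : Aˣ) : A) ∧
      ((uU K l ^ m : (Matrix (Fin l) (Fin l) (LaurentPolynomial K))ˣ) :
          Matrix (Fin l) (Fin l) (LaurentPolynomial K)) * DM T y K l g
        = DM T y K l g' * ((uU K l ^ m : (Matrix (Fin l) (Fin l) (LaurentPolynomial K))ˣ) :
          Matrix (Fin l) (Fin l) (LaurentPolynomial K)) := by
    intro m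
    induction m using Int.induction_on with
    | zero => intro g; exact ⟨g, by simp, by simp⟩
    | succ n ih =>
      intro g
      obtain ⟨g', h1, h2⟩ := ih (g.comap (T.symm : C(X, X)))
      refine ⟨g', ?_, ?_⟩
      · rw [zpow_add_one, Units.val_mul, mul_assoc, hA g, ← mul_assoc, h1, mul_assoc]
      · rw [zpow_add_one, Units.val_mul, mul_assoc,
          show ((uU K l : (Matrix (Fin l) (Fin l) (LaurentPolynomial K))ˣ) :
            Matrix (Fin l) (Fin l) (LaurentPolynomial K)) = uM K l from rfl,
          hM g, ← mul_assoc, h2, mul_assoc]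
    | pred n ih =>
      intro g
      obtain ⟨g', h1, h2⟩ := ih (g.comap (T : C(X, X)))
      refine ⟨g', ?_, ?_⟩
      · rw [zpow_sub_one, Units.val_mul, mul_assoc, hA' g, ← mul_assoc, h1, mul_assoc]
      · rw [zpow_sub_one, Units.val_mul, mul_assoc,
          show (((uU K l)⁻¹ : (Matrix (Fin l) (Fin l) (LaurentPolynomial K))ˣ) :
            Matrix (Fin l) (Fin l) (LaurentPolynomial K)) = vM K l from rfl,
          hM' g, ← mul_assoc, h2, mul_assoc]
  -- linear structure
  let Dlin : LocallyConstant X K →ₗ[K] Matrix (Fin l) (Fin l) (LaurentPolynomial K) :=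
    { toFun := DM T y K l
      map_add' := DM_add T y
      map_smul' := DM_smul T y }
  let Llin : (ℤ →₀ LocallyConstant X K) →ₗ[K] Matrix (Fin l) (Fin l) (LaurentPolynomial K) :=
    Finsupp.lsum K fun n =>
      (LinearMap.mulRight K
        ((uU K l ^ n : (Matrix (Fin l) (Fin l) (LaurentPolynomial K))ˣ) :
          Matrix (Fin l) (Fin l) (LaurentPolynomial K))).comp Dlin
  let elin : (ℤ →₀ LocallyConstant X K) →ₗ[K] A :=
    Finsupp.lsum K fun n =>
      (LinearMap.mulRight K (((t ^ n : Aˣ) : A))).comp ι.toLinearMap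
  have hbij : Function.Bijective elin := hbasis
  let E : (ℤ →₀ LocallyConstant X K) ≃ₗ[K] A := LinearEquiv.ofBijective elin hbij
  have hE : ∀ F : ℤ →₀ LocallyConstant X K,
      E F = F.sum fun n f => ι f * ((t ^ n : Aˣ) : A) := fun _ => rfl
  have hL : ∀ F : ℤ →₀ LocallyConstant X K,
      Llin F = F.sum fun n f => DM T y K l f *
        ((uU K l ^ n : (Matrix (Fin l) (Fin l) (LaurentPolynomial K))ˣ) :
          Matrix (Fin l) (Fin l) (LaurentPolynomial K)) := fun _ => rfl
  let Ψlin : A →ₗ[K] Matrix (Fin l) (Fin l) (LaurentPolynomial K) :=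
    Llin.comp E.symm.toLinearMap
  have hEsingle : ∀ (n : ℤ) (f : LocallyConstant X K),
      E (Finsupp.single n f) = ι f * ((t ^ n : Aˣ) : A) := by
    intro n f
    rw [hE, Finsupp.sum_single_index]
    rw [map_zero, zero_mul]
  have hΨsingle : ∀ (n : ℤ) (f : LocallyConstant X K),
      Ψlin (ι f * ((t ^ n : Aˣ) : A)) = DM T y K l f *
        ((uU K l ^ n : (Matrix (Fin l) (Fin l) (LaurentPolynomial K))ˣ) :
          Matrix (Fin l) (Fin l) (LaurentPolynomial K)) := by
    intro n f
    rw [← hEsingle n f]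
    show Llin (E.symm (E _)) = _
    rw [LinearEquiv.symm_apply_apply, hL, Finsupp.sum_single_index]
    rw [DM_zero, zero_mul]
  have hone : Ψlin 1 = 1 := by
    have h1 : (1 : A) = ι 1 * ((t ^ (0 : ℤ) : Aˣ) : A) := by simp
    rw [h1, hΨsingle]
    simp [DM_one]
  have hss : ∀ (m n : ℤ) (f g : LocallyConstant X K),
      Ψlin ((ι f * ((t ^ m : Aˣ) : A)) * (ι g * ((t ^ n : Aˣ) : A)))
        = (DM T y K l f * ((uU K l ^ m : (Matrix (Fin l) (Fin l) (LaurentPolynomial K))ˣ) :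
            Matrix (Fin l) (Fin l) (LaurentPolynomial K)))
          * (DM T y K l g * ((uU K l ^ n : (Matrix (Fin l) (Fin l) (LaurentPolynomial K))ˣ) :
            Matrix (Fin l) (Fin l) (LaurentPolynomial K))) := by
    intro m n f g
    obtain ⟨g', h1, h2⟩ := hkey m g
    have hprod : (ι f * ((t ^ m : Aˣ) : A)) * (ι g * ((t ^ n : Aˣ) : A))
        = ι (f * g') * ((t ^ (m + n) : Aˣ) : A) := by
      rw [map_mul, zpow_add, Units.val_mul]
      calc ι f * ((t ^ m : Aˣ) : A) * (ι g * ((t ^ n : Aˣ) : A))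
          = ι f * (((t ^ m : Aˣ) : A) * ι g) * ((t ^ n : Aˣ) : A) := by
            simp only [mul_assoc]
        _ = ι f * (ι g' * ((t ^ m : Aˣ) : A)) * ((t ^ n : Aˣ) : A) := by rw [h1]
        _ = ι f * ι g' * (((t ^ m : Aˣ) : A) * ((t ^ n : Aˣ) : A)) := by
            simp only [mul_assoc]
    rw [hprod, hΨsingle, DM_mul, zpow_add, Units.val_mul]
    calc DM T y K l f * DM T y K l g' *
          (((uU K l ^ m : (Matrix (Fin l) (Fin l) (LaurentPolynomial K))ˣ) :
            Matrix (Fin l) (Fin l) (LaurentPolynomial K)) *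
           ((uU K l ^ n : (Matrix (Fin l) (Fin l) (LaurentPolynomial K))ˣ) :
            Matrix (Fin l) (Fin l) (LaurentPolynomial K)))
        = DM T y K l f * (DM T y K l g' *
            ((uU K l ^ m : (Matrix (Fin l) (Fin l) (LaurentPolynomial K))ˣ) :
              Matrix (Fin l) (Fin l) (LaurentPolynomial K))) *
            ((uU K l ^ n : (Matrix (Fin l) (Fin l) (LaurentPolynomial K))ˣ) :
              Matrix (Fin l) (Fin l) (LaurentPolynomial K)) := by
          simp only [mul_assoc]
      _ = DM T y K l f * (((uU K l ^ m : (Matrix (Fin l) (Fin l) (LaurentPolynomial K))ˣ) :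
              Matrix (Fin l) (Fin l) (LaurentPolynomial K)) * DM T y K l g) *
            ((uU K l ^ n : (Matrix (Fin l) (Fin l) (LaurentPolynomial K))ˣ) :
              Matrix (Fin l) (Fin l) (LaurentPolynomial K)) := by rw [← h2]
      _ = _ := by simp only [mul_assoc]
  have hmul_sg : ∀ (m : ℤ) (f : LocallyConstant X K) (G : ℤ →₀ LocallyConstant X K),
      Ψlin (E (Finsupp.single m f) * E G)
        = Ψlin (E (Finsupp.single m f)) * Ψlin (E G) := by
    intro m f G
    induction G using Finsupp.induction with
    | zero => simp
    | single_add n g G' hn hg iH =>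
      rw [map_add, mul_add, map_add, map_add, mul_add, iH]
      congr 1
      rw [hEsingle m f, hEsingle n g, hss, hΨsingle, hΨsingle]
  have hmul : ∀ x z : A, Ψlin (x * z) = Ψlin x * Ψlin z := by
    intro x z
    obtain ⟨F, rfl⟩ := E.surjective x
    obtain ⟨G, rfl⟩ := E.surjective z
    induction F using Finsupp.induction with
    | zero => simp
    | single_add m f F' hm hf iH =>
      rw [map_add, add_mul, map_add, map_add, add_mul, iH, hmul_sg]
  let Ψ₀ : A →ₐ[K] Matrix (Fin l) (Fin l) (LaurentPolynomial K) :=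
    AlgHom.ofLinearMap Ψlin hone hmul
  have hΨ₀apply : ∀ a : A, Ψ₀ a = Ψlin a := fun _ => rfl
  have hΨ₀ι : ∀ f : LocallyConstant X K, Ψ₀ (ι f) = DM T y K l f := by
    intro f
    have h1 : (ι f : A) = ι f * ((t ^ (0 : ℤ) : Aˣ) : A) := by simp
    rw [hΨ₀apply, h1, hΨsingle]
    simp
  have hΨ₀t : Ψ₀ ((t : Aˣ) : A) = uM K l := by
    have h1 : ((t : Aˣ) : A) = ι 1 * ((t ^ (1 : ℤ) : Aˣ) : A) := by simp
    rw [hΨ₀apply, h1, hΨsingle]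
    simp [DM_one]
    rfl
  -- powers under any suitable algebra map
  have hzpow : ∀ (Ψ' : A →ₐ[K] Matrix (Fin l) (Fin l) (LaurentPolynomial K)),
      Ψ' ((t : Aˣ) : A) = uM K l → ∀ n : ℤ, Ψ' ((t ^ n : Aˣ) : A)
        = ((uU K l ^ n : (Matrix (Fin l) (Fin l) (LaurentPolynomial K))ˣ) :
            Matrix (Fin l) (Fin l) (LaurentPolynomial K)) := by
    intro Ψ' ht' n
    have hu' : Units.map (Ψ' : A →* Matrix (Fin l) (Fin l) (LaurentPolynomial K)) t = uU K l :=
      Units.ext (by simp; exact ht')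
    have h2 : Ψ' ((t ^ n : Aˣ) : A)
        = ((Units.map (Ψ' : A →* Matrix (Fin l) (Fin l) (LaurentPolynomial K)) t ^ n :
            (Matrix (Fin l) (Fin l) (LaurentPolynomial K))ˣ) :
            Matrix (Fin l) (Fin l) (LaurentPolynomial K)) := by
      rw [← map_zpow]; rfl
    rw [h2, hu']
  have hform : ∀ (Ψ' : A →ₐ[K] Matrix (Fin l) (Fin l) (LaurentPolynomial K)),
      (∀ f : LocallyConstant X K, Ψ' (ι f) = DM T y K l f) →
      Ψ' ((t : Aˣ) : A) = uM K l →
      ∀ F : ℤ →₀ LocallyConstant X K,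
        Ψ' (F.sum fun n f => ι f * ((t ^ n : Aˣ) : A))
          = F.sum fun n f => DM T y K l f *
              ((uU K l ^ n : (Matrix (Fin l) (Fin l) (LaurentPolynomial K))ˣ) :
                Matrix (Fin l) (Fin l) (LaurentPolynomial K)) := by
    intro Ψ' hf' ht' F
    rw [map_finsuppSum]
    exact Finsupp.sum_congr fun n _ => by rw [map_mul, hf', hzpow Ψ' ht']
  have huniq : ∀ (Ψ' : A →ₐ[K] Matrix (Fin l) (Fin l) (LaurentPolynomial K)),
      (∀ f : LocallyConstant X K, Ψ' (ι f) = DM T y K l f) →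
      Ψ' ((t : Aˣ) : A) = uM K l → Ψ' = Ψ₀ := by
    intro Ψ' hf' ht'
    apply AlgHom.ext
    intro a
    obtain ⟨F, rfl⟩ := E.surjective a
    rw [hE, hform Ψ' hf' ht', hform Ψ₀ hΨ₀ι hΨ₀t]
  -- kernel description
  have hker : ∀ a : A, Ψ₀ a = 0 ↔
      a ∈ TwoSidedIdeal.span
        {b : A | ∃ f : LocallyConstant X K,
          (∀ i : ℕ, i < l → f ((⇑T)^[i] y) = 0) ∧ b = ι f} := by
    intro a
    constructor
    · intro h0
      obtain ⟨F, rfl⟩ := E.surjective a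
      have hLF : (F.sum fun n f => DM T y K l f *
          ((uU K l ^ n : (Matrix (Fin l) (Fin l) (LaurentPolynomial K))ˣ) :
            Matrix (Fin l) (Fin l) (LaurentPolynomial K))) = 0 := by
        rw [← hform Ψ₀ hΨ₀ι hΨ₀t F, ← hE]; exact h0
      open Fin.CommRing in
      have hvan : ∀ (n : ℤ) (i : ℕ), i < l → F n ((⇑T)^[i] y) = 0 := by
        intro n i hi
        by_cases hmem : n ∈ F.support
        · set i' : Fin l := ⟨i, hi⟩ with hi'
          set j : Fin l := i' - ((n : ℤ) : Fin l) with hj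
          have h1 : (F.sum fun n' f => DM T y K l f *
              ((uU K l ^ n' : (Matrix (Fin l) (Fin l) (LaurentPolynomial K))ˣ) :
                Matrix (Fin l) (Fin l) (LaurentPolynomial K))) i' j = 0 := by
            rw [hLF]; rfl
          rw [Finsupp.sum, Matrix.sum_apply] at h1
          have h2 := congrArg ((Finsupp.applyAddHom n).comp (AddMonoidAlgebra.coeffAddEquiv (R := K) (M := ℤ)).toAddMonoidHom : LaurentPolynomial K →+ K) h1
          rw [map_sum, map_zero] at h2
          rw [Finset.sum_eq_single n] at h2
          · have hc : i' = j + ((n : ℤ) : Fin l) := by rw [hj]; ring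
            rw [show (DM T y K l (F n) *
                ((uU K l ^ n : (Matrix (Fin l) (Fin l) (LaurentPolynomial K))ˣ) :
                  Matrix (Fin l) (Fin l) (LaurentPolynomial K))) i' j
                = LaurentPolynomial.C (F n ((⇑T)^[(i' : ℕ)] y)) * LaurentPolynomial.T n from by
              rw [show DM T y K l (F n) = Matrix.diagonal
                  (fun k : Fin l => LaurentPolynomial.C ((F n) ((⇑T)^[(k : ℕ)] y))) from rfl,
                Matrix.diagonal_mul, uU_zpow_apply, if_pos hc]] at h2
            rw [coeff_C_mul_T, if_pos rfl] at h2
            exact h2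
          · intro n' _ hne
            rw [show DM T y K l (F n') = Matrix.diagonal
                (fun k : Fin l => LaurentPolynomial.C ((F n') ((⇑T)^[(k : ℕ)] y))) from rfl,
              Matrix.diagonal_mul, uU_zpow_apply]
            split_ifs with h
            · rw [coeff_C_mul_T, if_neg hne]
            · rw [mul_zero, map_zero]
          · intro hnm; exact absurd hmem hnm
        · rw [Finsupp.notMem_support_iff.mp hmem]; rfl
      rw [hE, Finsupp.sum]
      refine sum_mem fun n _ => ?_
      refine TwoSidedIdeal.mul_mem_right _ _ _ ?_
      exact TwoSidedIdeal.subset_span ⟨F n, fun i hi => hvan n i hi, rfl⟩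
    · intro hmem
      have hsub : {b : A | ∃ f : LocallyConstant X K,
          (∀ i : ℕ, i < l → f ((⇑T)^[i] y) = 0) ∧ b = ι f}
          ⊆ (TwoSidedIdeal.ker Ψ₀ : Set A) := by
        rintro b ⟨f, hf, rfl⟩
        rw [SetLike.mem_coe, TwoSidedIdeal.mem_ker, hΨ₀ι]
        rw [show DM T y K l f = Matrix.diagonal
            (fun k : Fin l => LaurentPolynomial.C (f ((⇑T)^[(k : ℕ)] y))) from rfl]
        rw [show (fun k : Fin l => LaurentPolynomial.C (f ((⇑T)^[(k : ℕ)] y)))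
            = fun _ => (0 : LaurentPolynomial K) from
          funext fun k => by rw [hf k k.isLt, map_zero], Matrix.diagonal_zero]
      have h := TwoSidedIdeal.mem_span_iff.mp hmem (TwoSidedIdeal.ker Ψ₀) hsub
      rwa [TwoSidedIdeal.mem_ker] at h
  refine ⟨⟨Ψ₀, ⟨fun f => hΨ₀ι f, hΨ₀t⟩, ?_⟩, ?_⟩
  · rintro Ψ' ⟨hf', ht'⟩
    exact huniq Ψ' (fun f => hf' f) ht'
  · rintro Ψ' ⟨hf', ht'⟩ a
    rw [show Ψ' = Ψ₀ from huniq Ψ' (fun f => hf' f) ht']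
    exact hker a
end
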